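/- Khintchine's inequality upper half for exponent 1: there is a universal constant T such that for every finite family of real numbers (x_i)_{i∈A}, (∑_{i∈A} x_i^2)^{1/2} ≤ T · Ave_{ε_i=±1} |∑_{i∈A} ε_i x_i|, where the average is taken over all 2^{|A|} sign choices. -/

import Mathlib

open Finset

private def S (n : ℕ) (x : Fin n → ℝ) (ε : Fin n → Bool) : ℝ :=
  ∑ i, (if ε i then (1 : ℝ) else -1) * x i

private lemma sum_split (n : ℕ) (x : Fin (n+1) → ℝ) (f : ℝ → ℝ) :
    ∑ ε : Fin (n+1) → Bool, f (S (n+1) x ε)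
      = ∑ ε : Fin n → Bool,
          (f (x 0 + S n (fun i : Fin n => x i.succ) ε) + f (-x 0 + S n (fun i : Fin n => x i.succ) ε)) := by
  rw [← (Fin.consEquiv (fun _ : Fin (n+1) => Bool)).sum_comp (fun ε => f (S (n+1) x ε))]
  rw [Fintype.sum_prod_type_right]
  refine Finset.sum_congr rfl fun ε _ => ?_
  rw [Fintype.sum_bool]
  congr 1 <;>
  · unfold S
    rw [Fin.sum_univ_succ]
    simp [Fin.consEquiv]

private lemma m2 : ∀ (n : ℕ) (x : Fin n → ℝ),
    ∑ ε : Fin n → Bool, (S n x ε) ^ 2 = 2 ^ n * ∑ i, x i ^ 2 := by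
  intro n
  induction n with
  | zero => intro x; simp [S]
  | succ n ih =>
    intro x
    rw [sum_split n x (fun t => t ^ 2)]
    have : ∀ ε : Fin n → Bool,
        (x 0 + S n (fun i : Fin n => x i.succ) ε) ^ 2 + (-x 0 + S n (fun i : Fin n => x i.succ) ε) ^ 2
          = 2 * x 0 ^ 2 + 2 * (S n (fun i : Fin n => x i.succ) ε) ^ 2 := by intro ε; ring
    simp_rw [this]
    rw [Finset.sum_add_distrib, Finset.sum_const, ← Finset.mul_sum, ih]
    simp [Fin.sum_univ_succ, Fintype.card_fun]
    ring

private lemma m4 : ∀ (n : ℕ) (x : Fin n → ℝ),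
    ∑ ε : Fin n → Bool, (S n x ε) ^ 4 ≤ 3 * 2 ^ n * (∑ i, x i ^ 2) ^ 2 := by
  intro n
  induction n with
  | zero => intro x; simp [S]
  | succ n ih =>
    intro x
    rw [sum_split n x (fun t => t ^ 4)]
    have key : ∀ ε : Fin n → Bool,
        (x 0 + S n (fun i : Fin n => x i.succ) ε) ^ 4 + (-x 0 + S n (fun i : Fin n => x i.succ) ε) ^ 4
          = 2 * x 0 ^ 4 + 12 * x 0 ^ 2 * (S n (fun i : Fin n => x i.succ) ε) ^ 2
            + 2 * (S n (fun i : Fin n => x i.succ) ε) ^ 4 := by intro ε; ring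
    simp_rw [key]
    rw [Finset.sum_add_distrib, Finset.sum_add_distrib, Finset.sum_const, ← Finset.mul_sum,
      ← Finset.mul_sum, m2 n (fun i : Fin n => x i.succ)]
    have h4 := ih (fun i : Fin n => x i.succ)
    have hσ : (0:ℝ) ≤ ∑ i : Fin n, x i.succ ^ 2 := Finset.sum_nonneg fun i _ => sq_nonneg _
    have hx0 : (0:ℝ) ≤ x 0 ^ 2 := sq_nonneg _
    have hcard : (Finset.univ : Finset (Fin n → Bool)).card = 2 ^ n := by
      simp [Fintype.card_fun]
    rw [hcard, Fin.sum_univ_succ (f := fun i => x i ^ 2)]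
    have h2n : (0:ℝ) < 2 ^ n := by positivity
    rw [nsmul_eq_mul, pow_succ (2:ℝ) n]
    push_cast
    nlinarith [mul_nonneg h2n.le (sq_nonneg (x 0 ^ 2)), h4,
      mul_nonneg (mul_nonneg h2n.le hx0) hσ, mul_nonneg h2n.le (mul_nonneg hσ hσ)]

theorem stmt_7 : ∃ T : ℝ, 0 < T ∧ ∀ (n : ℕ) (x : Fin n → ℝ),
    (∑ i, x i ^ 2) ^ ((1 : ℝ) / 2) ≤
      T * ((∑ ε : Fin n → Bool, |∑ i, (if ε i then (1 : ℝ) else -1) * x i|) / 2 ^ n) := by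
  refine ⟨Real.sqrt 3, Real.sqrt_pos.2 (by norm_num), fun n x => ?_⟩
  set σ : ℝ := ∑ i, x i ^ 2 with hσdef
  have hσ : 0 ≤ σ := Finset.sum_nonneg fun i _ => sq_nonneg _
  set A1 : ℝ := ∑ ε : Fin n → Bool, |S n x ε| with hA1def
  have hA1 : 0 ≤ A1 := Finset.sum_nonneg fun ε _ => abs_nonneg _
  have h2n : (0:ℝ) < 2 ^ n := by positivity
  -- key inequality : σ ≤ 3 * (A1 / 2^n)^2
  have key : σ ≤ 3 * (A1 / 2 ^ n) ^ 2 := by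
    rcases eq_or_lt_of_le hσ with h0 | hσpos
    · rw [← h0]; positivity
    · set A2 : ℝ := ∑ ε : Fin n → Bool, |S n x ε| ^ 2 with hA2def
      set A3 : ℝ := ∑ ε : Fin n → Bool, |S n x ε| ^ 3 with hA3def
      set A4 : ℝ := ∑ ε : Fin n → Bool, |S n x ε| ^ 4 with hA4def
      have hA2 : A2 = 2 ^ n * σ := by
        rw [hA2def, ← m2 n x]; exact Finset.sum_congr rfl fun ε _ => by rw [sq_abs]
      have hA4 : A4 ≤ 3 * 2 ^ n * σ ^ 2 := by
        calc A4 = ∑ ε : Fin n → Bool, (S n x ε) ^ 4 :=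
              Finset.sum_congr rfl fun ε _ => by rw [pow_abs, abs_of_nonneg (by positivity)]
          _ ≤ _ := m4 n x
      have hA2pos : 0 < A2 := by rw [hA2]; positivity
      have cs1 : A2 ^ 2 ≤ A1 * A3 := by
        have := Finset.sum_mul_sq_le_sq_mul_sq Finset.univ
          (fun ε : Fin n → Bool => Real.sqrt |S n x ε|)
          (fun ε : Fin n → Bool => Real.sqrt |S n x ε| * |S n x ε|)
        calc A2 ^ 2 = (∑ ε : Fin n → Bool,
              Real.sqrt |S n x ε| * (Real.sqrt |S n x ε| * |S n x ε|)) ^ 2 := by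
              congr 1
              refine Finset.sum_congr rfl fun ε _ => ?_
              rw [← mul_assoc, Real.mul_self_sqrt (abs_nonneg _), sq]
          _ ≤ (∑ ε : Fin n → Bool, Real.sqrt |S n x ε| ^ 2) *
              ∑ ε : Fin n → Bool, (Real.sqrt |S n x ε| * |S n x ε|) ^ 2 := this
          _ = A1 * A3 := by
              congr 1
              · exact Finset.sum_congr rfl fun ε _ => Real.sq_sqrt (abs_nonneg _)
              · refine Finset.sum_congr rfl fun ε _ => ?_
                rw [mul_pow, Real.sq_sqrt (abs_nonneg _)]
                ring
      have cs2 : A3 ^ 2 ≤ A2 * A4 := by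
        have := Finset.sum_mul_sq_le_sq_mul_sq Finset.univ
          (fun ε : Fin n → Bool => |S n x ε|)
          (fun ε : Fin n → Bool => |S n x ε| ^ 2)
        calc A3 ^ 2 = (∑ ε : Fin n → Bool, |S n x ε| * |S n x ε| ^ 2) ^ 2 := by
              congr 1; exact Finset.sum_congr rfl fun ε _ => by ring
          _ ≤ (∑ ε : Fin n → Bool, |S n x ε| ^ 2) *
              ∑ ε : Fin n → Bool, (|S n x ε| ^ 2) ^ 2 := this
          _ = A2 * A4 := by
              congr 1; exact Finset.sum_congr rfl fun ε _ => by ring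
      have hA3 : 0 ≤ A3 := Finset.sum_nonneg fun ε _ => by positivity
      have combined : A2 ^ 4 ≤ A1 ^ 2 * (A2 * A4) := by
        calc A2 ^ 4 = (A2 ^ 2) ^ 2 := by ring
          _ ≤ (A1 * A3) ^ 2 := by
              apply pow_le_pow_left₀ (sq_nonneg _) cs1 -- A2^2 ≥ 0
          _ = A1 ^ 2 * A3 ^ 2 := by ring
          _ ≤ A1 ^ 2 * (A2 * A4) := by
              apply mul_le_mul_of_nonneg_left cs2 (sq_nonneg _)
      -- A2^3 ≤ A1^2 * A4
      have h3 : A2 ^ 3 ≤ A1 ^ 2 * A4 := by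
        have := combined
        nlinarith [hA2pos]
      -- substitute
      rw [hA2] at h3
      have h4 : (2 ^ n * σ) ^ 3 ≤ A1 ^ 2 * (3 * 2 ^ n * σ ^ 2) := by
        calc (2 ^ n * σ) ^ 3 ≤ A1 ^ 2 * A4 := h3
          _ ≤ A1 ^ 2 * (3 * 2 ^ n * σ ^ 2) :=
            mul_le_mul_of_nonneg_left hA4 (sq_nonneg _)
      have h5 : σ * (2 ^ n) ^ 2 ≤ 3 * A1 ^ 2 := by
        nlinarith [mul_pos h2n (mul_pos hσpos hσpos), mul_pos (mul_pos h2n h2n) (mul_pos hσpos hσpos)]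
      rw [div_pow, ← mul_div_assoc, le_div_iff₀ (by positivity)]
      exact h5
  -- conclude
  calc σ ^ ((1:ℝ)/2) = Real.sqrt σ := (Real.sqrt_eq_rpow σ).symm
    _ ≤ Real.sqrt (3 * (A1 / 2 ^ n) ^ 2) := Real.sqrt_le_sqrt key
    _ = Real.sqrt 3 * (A1 / 2 ^ n) := by
        rw [Real.sqrt_mul (by norm_num), Real.sqrt_sq (by positivity)]
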